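/- The eight 5×5 complex matrices diagonal(v₁), diagonal(v₂), diagonal(v₃), diagonal(v₄), B(v₁), B(v₂), B(v₃), B(v₄) pairwise commute, and the set of all complex linear combinations of these eight matrices is closed under multiplication; that is, this span is a commutative subring of the 5×5 complex matrices. -/
import Mathlib

open Matrix

/-- The secondary-diagonal (anti-diagonal) matrix with entries `v i` at `(i, Fin.rev i)`. -/
def secondary {n : ℕ} (v : Fin n → ℂ) : Matrix (Fin n) (Fin n) ℂ :=
  Matrix.of fun i j => if j = Fin.rev i then v i else 0

lemma dd {n : ℕ} (v w : Fin n → ℂ) :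
    Matrix.diagonal v * Matrix.diagonal w = Matrix.diagonal (fun i => v i * w i) :=
  Matrix.diagonal_mul_diagonal v w

lemma ds {n : ℕ} (v w : Fin n → ℂ) :
    Matrix.diagonal v * secondary w = secondary (fun i => v i * w i) := by
  ext i j
  simp [secondary, Matrix.diagonal_mul, mul_ite]

lemma sd {n : ℕ} (v w : Fin n → ℂ) (hw : ∀ i, w (Fin.rev i) = w i) :
    secondary v * Matrix.diagonal w = secondary (fun i => v i * w i) := by
  ext i j
  simp only [secondary, Matrix.mul_diagonal, Matrix.of_apply, ite_mul, zero_mul]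
  split
  · rename_i h; subst h; rw [hw]
  · rfl

lemma ss {n : ℕ} (v w : Fin n → ℂ) (hw : ∀ i, w (Fin.rev i) = w i) :
    secondary v * secondary w = Matrix.diagonal (fun i => v i * w i) := by
  ext i j
  simp only [secondary, Matrix.mul_apply, Matrix.of_apply, Matrix.diagonal_apply]
  rw [Finset.sum_eq_single (Fin.rev i)]
  · rw [if_pos rfl, Fin.rev_rev, hw]
    by_cases h : j = i
    · subst h; simp
    · rw [if_neg h, if_neg (fun hh => h hh.symm), mul_zero]
  · intro k _ hk; rw [if_neg hk, zero_mul]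
  · simp

theorem stmt_18 :
    let v1 : Fin 5 → ℂ := ![1, 1, 1, 1, 1]
    let v2 : Fin 5 → ℂ := ![-1, 1, 1, 1, -1]
    let v3 : Fin 5 → ℂ := ![-1, -1, 1, -1, -1]
    let v4 : Fin 5 → ℂ := ![1, -1, 1, -1, 1]
    let S : Set (Matrix (Fin 5) (Fin 5) ℂ) :=
      {Matrix.diagonal v1, Matrix.diagonal v2, Matrix.diagonal v3, Matrix.diagonal v4,
       secondary v1, secondary v2, secondary v3, secondary v4}
    (∀ M ∈ S, ∀ N ∈ S, M * N = N * M) ∧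
    (∀ x ∈ Submodule.span ℂ S, ∀ y ∈ Submodule.span ℂ S,
      x * y ∈ Submodule.span ℂ S ∧ x * y = y * x) := by
  intro v1 v2 v3 v4 S
  have hp1 : ∀ i, v1 (Fin.rev i) = v1 i := by intro i; fin_cases i <;> rfl
  have hp2 : ∀ i, v2 (Fin.rev i) = v2 i := by intro i; fin_cases i <;> rfl
  have hp3 : ∀ i, v3 (Fin.rev i) = v3 i := by intro i; fin_cases i <;> rfl
  have hp4 : ∀ i, v4 (Fin.rev i) = v4 i := by intro i; fin_cases i <;> rfl
  have sd1 : ∀ v, secondary v * Matrix.diagonal v1 = secondary (fun i => v i * v1 i) :=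
    fun v => sd v v1 hp1
  have sd2 : ∀ v, secondary v * Matrix.diagonal v2 = secondary (fun i => v i * v2 i) :=
    fun v => sd v v2 hp2
  have sd3 : ∀ v, secondary v * Matrix.diagonal v3 = secondary (fun i => v i * v3 i) :=
    fun v => sd v v3 hp3
  have sd4 : ∀ v, secondary v * Matrix.diagonal v4 = secondary (fun i => v i * v4 i) :=
    fun v => sd v v4 hp4
  have ss1 : ∀ v, secondary v * secondary v1 = Matrix.diagonal (fun i => v i * v1 i) :=
    fun v => ss v v1 hp1
  have ss2 : ∀ v, secondary v * secondary v2 = Matrix.diagonal (fun i => v i * v2 i) :=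
    fun v => ss v v2 hp2
  have ss3 : ∀ v, secondary v * secondary v3 = Matrix.diagonal (fun i => v i * v3 i) :=
    fun v => ss v v3 hp3
  have ss4 : ∀ v, secondary v * secondary v4 = Matrix.diagonal (fun i => v i * v4 i) :=
    fun v => ss v v4 hp4
  have m11 : (fun i => v1 i * v1 i) = v1 := by funext i; fin_cases i <;> norm_num [v1]
  have m12 : (fun i => v1 i * v2 i) = v2 := by funext i; fin_cases i <;> norm_num [v1, v2]
  have m13 : (fun i => v1 i * v3 i) = v3 := by funext i; fin_cases i <;> norm_num [v1, v3]
  have m14 : (fun i => v1 i * v4 i) = v4 := by funext i; fin_cases i <;> norm_num [v1, v4]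
  have m21 : (fun i => v2 i * v1 i) = v2 := by funext i; fin_cases i <;> norm_num [v1, v2]
  have m22 : (fun i => v2 i * v2 i) = v1 := by funext i; fin_cases i <;> norm_num [v1, v2]
  have m23 : (fun i => v2 i * v3 i) = v4 := by funext i; fin_cases i <;> norm_num [v2, v3, v4]
  have m24 : (fun i => v2 i * v4 i) = v3 := by funext i; fin_cases i <;> norm_num [v2, v3, v4]
  have m31 : (fun i => v3 i * v1 i) = v3 := by funext i; fin_cases i <;> norm_num [v1, v3]
  have m32 : (fun i => v3 i * v2 i) = v4 := by funext i; fin_cases i <;> norm_num [v2, v3, v4]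
  have m33 : (fun i => v3 i * v3 i) = v1 := by funext i; fin_cases i <;> norm_num [v1, v3]
  have m34 : (fun i => v3 i * v4 i) = v2 := by funext i; fin_cases i <;> norm_num [v2, v3, v4]
  have m41 : (fun i => v4 i * v1 i) = v4 := by funext i; fin_cases i <;> norm_num [v1, v4]
  have m42 : (fun i => v4 i * v2 i) = v3 := by funext i; fin_cases i <;> norm_num [v2, v3, v4]
  have m43 : (fun i => v4 i * v3 i) = v2 := by funext i; fin_cases i <;> norm_num [v2, v3, v4]
  have m44 : (fun i => v4 i * v4 i) = v1 := by funext i; fin_cases i <;> norm_num [v1, v4]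
  have mem8 : Matrix.diagonal v1 ∈ S ∧ Matrix.diagonal v2 ∈ S ∧ Matrix.diagonal v3 ∈ S ∧
      Matrix.diagonal v4 ∈ S ∧ secondary v1 ∈ S ∧ secondary v2 ∈ S ∧ secondary v3 ∈ S ∧
      secondary v4 ∈ S := by
    simp only [S, Set.mem_insert_iff, Set.mem_singleton_iff]
    tauto
  obtain ⟨e1, e2, e3, e4, f1, f2, f3, f4⟩ := mem8
  have key : ∀ a ∈ S, ∀ b ∈ S, a * b ∈ S ∧ a * b = b * a := by
    intro a ha b hb
    simp only [S, Set.mem_insert_iff, Set.mem_singleton_iff] at ha hb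
    rcases ha with rfl | rfl | rfl | rfl | rfl | rfl | rfl | rfl <;>
      rcases hb with rfl | rfl | rfl | rfl | rfl | rfl | rfl | rfl <;>
      simp only [dd, ds, sd1, sd2, sd3, sd4, ss1, ss2, ss3, ss4,
        m11, m12, m13, m14, m21, m22, m23, m24, m31, m32, m33, m34, m41, m42, m43, m44] <;>
      exact ⟨by first | exact e1 | exact e2 | exact e3 | exact e4 | exact f1 | exact f2 | exact f3 | exact f4, trivial⟩
  refine ⟨fun M hM N hN => (key M hM N hN).2, ?_⟩
  have comm : ∀ x ∈ Submodule.span ℂ S, ∀ y ∈ Submodule.span ℂ S, x * y = y * x := by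
    intro x hx
    induction hx using Submodule.span_induction with
    | mem a ha =>
      intro y hy
      induction hy using Submodule.span_induction with
      | mem b hb => exact (key a ha b hb).2
      | zero => simp
      | add u w hu hw ihu ihw => rw [mul_add, add_mul, ihu, ihw]
      | smul r u hu ih => rw [mul_smul_comm, smul_mul_assoc, ih]
    | zero => intro y hy; simp
    | add u w hu hw ihu ihw => intro y hy; rw [add_mul, mul_add, ihu y hy, ihw y hy]
    | smul r u hu ih => intro y hy; rw [smul_mul_assoc, mul_smul_comm, ih y hy]
  intro x hx y hy
  refine ⟨?_, comm x hx y hy⟩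
  have hmem := Submodule.mul_mem_mul hx hy
  rw [Submodule.span_mul_span] at hmem
  refine Submodule.span_mono ?_ hmem
  rintro _ ⟨a, ha, b, hb, rfl⟩
  exact (key a ha b hb).1
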